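/- Let n, m ≥ 1 be integers and let M ∈ GF(2)[x] be a nonzero polynomial with deg M ≤ m. If p is chosen uniformly at random from the (nonempty) set of monic irreducible polynomials of degree exactly n in GF(2)[x], then the probability that p divides M is at most m · 2^{1−n}. -/

import Mathlib

open Polynomial UniqueFactorizationMonoid


private lemma dvd_self_pn (q : (ZMod 2)[X]) (hq : q.Monic) (hirr : Irreducible q) :
    q ∣ X ^ 2 ^ q.natDegree - X := by
  have hq0 : q ≠ 0 := hirr.ne_zero
  haveI : Fact (Irreducible q) := ⟨hirr⟩
  set F := AdjoinRoot q
  let pb : PowerBasis (ZMod 2) F := AdjoinRoot.powerBasis hq0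
  haveI : Fintype F := Module.fintypeOfFintype pb.basis
  have hcard : Fintype.card F = 2 ^ q.natDegree := by
    rw [Module.card_fintype pb.basis]
    rw [ZMod.card, Fintype.card_fin]; exact congrArg _ (AdjoinRoot.powerBasis_dim hq0)
  set α := AdjoinRoot.root q
  have hroot : α ^ 2 ^ q.natDegree = α := by
    rw [← hcard]; exact FiniteField.pow_card α
  have hmin : minpoly (ZMod 2) α = q := by
    rw [AdjoinRoot.minpoly_root hq0, hq.leadingCoeff]
    simp
  have : (aeval α) (X ^ 2 ^ q.natDegree - X : (ZMod 2)[X]) = 0 := by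
    simp [hroot]
  calc q = minpoly (ZMod 2) α := hmin.symm
    _ ∣ _ := minpoly.dvd _ _ this

private lemma nat_pow_sub_one_dvd {d n : ℕ} (h : d ∣ n) : 2 ^ d - 1 ∣ 2 ^ n - 1 := by
  obtain ⟨k, rfl⟩ := h
  have : ((2:ℤ) ^ d - 1) ∣ (2 ^ (d * k) - 1) := by
    have := sub_dvd_pow_sub_pow ((2:ℤ) ^ d) 1 k
    simpa [← pow_mul] using this
  have h1 : (1:ℕ) ≤ 2 ^ d := Nat.one_le_two_pow
  have h2 : (1:ℕ) ≤ 2 ^ (d * k) := Nat.one_le_two_pow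
  zify [h1, h2]
  exact this

private lemma X_pow_sub_one_dvd {a b : ℕ} (h : a ∣ b) :
    (X ^ a - 1 : (ZMod 2)[X]) ∣ X ^ b - 1 := by
  obtain ⟨k, rfl⟩ := h
  have := sub_dvd_pow_sub_pow (X ^ a : (ZMod 2)[X]) 1 k
  simpa [← pow_mul] using this

private lemma pn_dvd_pn {d n : ℕ} (hd : 1 ≤ d) (hn : 1 ≤ n) (h : d ∣ n) :
    (X ^ 2 ^ d - X : (ZMod 2)[X]) ∣ X ^ 2 ^ n - X := by
  have key : ∀ m : ℕ, 1 ≤ m → (X ^ 2 ^ m - X : (ZMod 2)[X]) = X * (X ^ (2 ^ m - 1) - 1) := by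
    intro m hm
    have : 2 ^ m = 1 + (2 ^ m - 1) := by
      have := Nat.one_le_two_pow (n := m); omega
    conv_lhs => rw [this]
    rw [pow_add, pow_one, mul_sub, mul_one]
  rw [key d hd, key n hn]
  exact mul_dvd_mul_left X (X_pow_sub_one_dvd (nat_pow_sub_one_dvd h))

private lemma degree_dvd_of_dvd_pn {n : ℕ} (hn : 1 ≤ n) (q : (ZMod 2)[X]) (hq : q.Monic)
    (hirr : Irreducible q) (hdvd : q ∣ X ^ 2 ^ n - X) : q.natDegree ∣ n := by
  haveI : Fact (Nat.Prime 2) := ⟨Nat.prime_two⟩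
  set L := GaloisField 2 n
  haveI : Fintype L := Fintype.ofFinite L
  have hcardL : Fintype.card L = 2 ^ n := by
    rw [← Nat.card_eq_fintype_card]; exact GaloisField.card 2 n (by omega)
  have hsplits : Splits ((X ^ 2 ^ n - X : (ZMod 2)[X]).map (algebraMap (ZMod 2) L)) := by
    have := FiniteField.splits_X_pow_card_sub_X 2 (K := L)
    rwa [hcardL] at this
  have hPn0 : (X ^ 2 ^ n - X : (ZMod 2)[X]) ≠ 0 := by
    have := FiniteField.X_pow_card_pow_sub_X_ne_zero (K' := ZMod 2) (n := n) (p := 2) (by omega) one_lt_two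
    exact this
  have hqsplits : Splits (q.map (algebraMap (ZMod 2) L)) :=
    Splits.of_dvd hsplits (Polynomial.map_ne_zero hPn0) (Polynomial.map_dvd (algebraMap (ZMod 2) L) hdvd)
  have hdeg : q.degree ≠ 0 :=
    (natDegree_pos_iff_degree_pos.mp hirr.natDegree_pos).ne'
  obtain ⟨β, hβ⟩ := hqsplits.exists_eval_eq_zero (by rw [degree_map]; exact hdeg)
  have haev : (aeval β) q = 0 := by rw [aeval_def, eval₂_eq_eval_map]; exact hβ
  have hmin : q = minpoly (ZMod 2) β := minpoly.eq_of_irreducible_of_monic hirr haev hq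
  have hβint : IsIntegral (ZMod 2) β := IsIntegral.of_finite _ β
  have h1 : Module.finrank (ZMod 2) (IntermediateField.adjoin (ZMod 2) {β}) = q.natDegree := by
    rw [IntermediateField.adjoin.finrank hβint, ← hmin]
  have h2 : Module.finrank (ZMod 2) L = n := GaloisField.finrank 2 (by omega)
  have := Module.finrank_mul_finrank (ZMod 2) (IntermediateField.adjoin (ZMod 2) {β}) L
  rw [h1, h2] at this
  exact Dvd.intro _ this

private lemma mem_nf {f q : (ZMod 2)[X]} (hf : f ≠ 0) (hq : q.Monic) (hirr : Irreducible q)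
    (hdvd : q ∣ f) : q ∈ normalizedFactors f := by
  obtain ⟨r, hr, hassoc⟩ := exists_mem_normalizedFactors_of_dvd hf hirr hdvd
  have hrmonic : r.Monic := by
    have := normalize_normalized_factor r hr
    have hr0 : r ≠ 0 := (irreducible_of_normalized_factor r hr).ne_zero
    rw [← this]
    exact monic_normalize hr0
  rwa [eq_of_monic_of_associated hq hrmonic hassoc]

private lemma sum_nf_degrees {f : (ZMod 2)[X]} (hf : f ≠ 0) :
    (Multiset.map natDegree (normalizedFactors f)).sum = f.natDegree := by
  have h0 : (0 : (ZMod 2)[X]) ∉ normalizedFactors f := zero_notMem_normalizedFactors f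
  have := natDegree_multiset_prod (normalizedFactors f) h0
  rw [← this]
  exact natDegree_eq_of_degree_eq
    (degree_eq_degree_of_associated (prod_normalizedFactors hf))

private lemma sum_degrees_le {f : (ZMod 2)[X]} (hf : f ≠ 0) (S : Finset ((ZMod 2)[X]))
    (h : ∀ q ∈ S, q.Monic ∧ Irreducible q ∧ q ∣ f) :
    ∑ q ∈ S, q.natDegree ≤ f.natDegree := by
  classical
  have hsub : S ⊆ (normalizedFactors f).toFinset := by
    intro q hq
    rw [Multiset.mem_toFinset]
    exact mem_nf hf (h q hq).1 (h q hq).2.1 (h q hq).2.2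
  have hle : S.val ≤ normalizedFactors f := by
    calc S.val ≤ (normalizedFactors f).toFinset.val := Finset.val_le_iff.mpr hsub
      _ = (normalizedFactors f).dedup := Multiset.toFinset_val _
      _ ≤ normalizedFactors f := Multiset.dedup_le _
  have : (Multiset.map natDegree S.val).sum ≤ (Multiset.map natDegree (normalizedFactors f)).sum := by
    obtain ⟨u, hu⟩ := Multiset.le_iff_exists_add.mp hle
    rw [hu]
    simp
  rw [sum_nf_degrees hf] at this
  exact this

private lemma geom_icc (k : ℕ) : ∑ d ∈ Finset.Icc 1 k, 2 ^ d = 2 ^ (k + 1) - 2 := by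
  induction k with
  | zero => simp
  | succ k ih =>
    rw [Finset.sum_Icc_succ_top (by omega), ih]
    have : (2:ℕ) ≤ 2 ^ (k+1) := by
      have := Nat.one_le_two_pow (n := k)
      rw [pow_succ]; omega
    have h2 : (2:ℕ) ^ (k+1+1) = 2 ^ (k+1) + 2^(k+1) := by ring
    omega

private lemma monic_of_nf {f q : (ZMod 2)[X]} (hq : q ∈ normalizedFactors f) : q.Monic := by
  have h1 := normalize_normalized_factor q hq
  have h0 : q ≠ 0 := (irreducible_of_normalized_factor q hq).ne_zero
  rw [← h1]; exact monic_normalize h0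

private lemma denom_count {n : ℕ} (hn : 1 ≤ n) :
    2 ^ (n - 1) ≤ n * ((normalizedFactors (X ^ 2 ^ n - X : (ZMod 2)[X])).toFinset.filter
      (fun q => q.natDegree = n)).card := by
  classical
  set P : (ZMod 2)[X] := X ^ 2 ^ n - X with hPdef
  have hP0 : P ≠ 0 :=
    FiniteField.X_pow_card_pow_sub_X_ne_zero (K' := ZMod 2) (n := n) (p := 2) (by omega) one_lt_two
  have hPdeg : P.natDegree = 2 ^ n :=
    FiniteField.X_pow_card_pow_sub_X_natDegree_eq (K' := ZMod 2) (n := n) (p := 2) (by omega) one_lt_two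
  have hsep : Separable P := galois_poly_separable 2 (2 ^ n) (dvd_pow_self 2 (by omega))
  have hsf : Squarefree P := hsep.squarefree
  have hnodup : (normalizedFactors P).Nodup :=
    (squarefree_iff_nodup_normalizedFactors hP0).mp hsf
  set F : Finset ((ZMod 2)[X]) := (normalizedFactors P).toFinset with hFdef
  have hFval : F.val = normalizedFactors P := by
    rw [hFdef, Multiset.toFinset_val, Multiset.Nodup.dedup hnodup]
  have hsumF : ∑ q ∈ F, q.natDegree = 2 ^ n := by
    have : ∑ q ∈ F, q.natDegree = (Multiset.map natDegree F.val).sum := rfl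
    rw [this, hFval, sum_nf_degrees hP0, hPdeg]
  have hmem : ∀ q ∈ F, q.Monic ∧ Irreducible q ∧ q.natDegree ∣ n ∧ 1 ≤ q.natDegree := by
    intro q hq
    rw [hFdef, Multiset.mem_toFinset] at hq
    have hmon := monic_of_nf hq
    have hirr := irreducible_of_normalized_factor q hq
    have hdvd := dvd_of_mem_normalizedFactors hq
    exact ⟨hmon, hirr, degree_dvd_of_dvd_pn hn q hmon hirr hdvd, hirr.natDegree_pos⟩
  -- split the sum
  rw [← Finset.sum_filter_add_sum_filter_not F (fun q => q.natDegree = n)] at hsumF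
  set Fn := F.filter (fun q => q.natDegree = n)
  set F' := F.filter (fun q => ¬ q.natDegree = n)
  have hFn : ∑ q ∈ Fn, q.natDegree = n * Fn.card := by
    rw [Finset.sum_congr rfl (fun q hq => (Finset.mem_filter.mp hq).2), Finset.sum_const,
      smul_eq_mul, mul_comm]
  -- bound the small-degree part
  have hmaps : ∀ q ∈ F', q.natDegree ∈ Finset.Icc 1 (n / 2) := by
    intro q hq
    rw [Finset.mem_filter] at hq
    obtain ⟨hm, hi, hd, h1⟩ := hmem q hq.1
    obtain ⟨k, hk⟩ := hd
    have hk2 : 2 ≤ k := by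
      rcases Nat.lt_or_ge k 2 with h | h
      · interval_cases k <;> simp_all <;> omega
      · exact h
    have : q.natDegree * 2 ≤ n := by
      calc q.natDegree * 2 ≤ q.natDegree * k := Nat.mul_le_mul_left _ hk2
        _ = n := hk.symm
    rw [Finset.mem_Icc]
    exact ⟨h1, Nat.le_div_iff_mul_le (by omega) |>.mpr this⟩
  have hfib := Finset.sum_fiberwise_of_maps_to hmaps (fun q => q.natDegree)
  have hinner : ∀ d ∈ Finset.Icc 1 (n / 2),
      ∑ q ∈ F'.filter (fun q => q.natDegree = d), q.natDegree ≤ 2 ^ d := by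
    intro d hd
    rw [Finset.mem_Icc] at hd
    have hPd0 : (X ^ 2 ^ d - X : (ZMod 2)[X]) ≠ 0 :=
      FiniteField.X_pow_card_pow_sub_X_ne_zero (K' := ZMod 2) (n := d) (p := 2) (by omega) one_lt_two
    have hPddeg : (X ^ 2 ^ d - X : (ZMod 2)[X]).natDegree = 2 ^ d :=
      FiniteField.X_pow_card_pow_sub_X_natDegree_eq (K' := ZMod 2) (n := d) (p := 2) (by omega) one_lt_two
    calc ∑ q ∈ F'.filter (fun q => q.natDegree = d), q.natDegree
        ≤ (X ^ 2 ^ d - X : (ZMod 2)[X]).natDegree := by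
          apply sum_degrees_le hPd0
          intro q hq
          rw [Finset.mem_filter] at hq
          obtain ⟨hm, hi, _, _⟩ := hmem q (Finset.mem_filter.mp hq.1).1
          refine ⟨hm, hi, ?_⟩
          have := dvd_self_pn q hm hi
          rwa [hq.2] at this
      _ = 2 ^ d := hPddeg
  have hsmall : ∑ q ∈ F', q.natDegree ≤ 2 ^ (n / 2 + 1) - 2 := by
    calc ∑ q ∈ F', q.natDegree = ∑ d ∈ Finset.Icc 1 (n / 2),
          ∑ q ∈ F'.filter (fun q => q.natDegree = d), q.natDegree := hfib.symm
      _ ≤ ∑ d ∈ Finset.Icc 1 (n / 2), 2 ^ d := Finset.sum_le_sum hinner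
      _ = 2 ^ (n / 2 + 1) - 2 := geom_icc _
  -- arithmetic
  have harith : 2 ^ (n / 2 + 1) - 2 + 2 ^ (n - 1) ≤ 2 ^ n := by
    rcases Nat.lt_or_ge n 4 with h | h
    · interval_cases n <;> norm_num
    · have h1 : n / 2 + 1 ≤ n - 1 := by omega
      have h2 : (2:ℕ) ^ (n / 2 + 1) ≤ 2 ^ (n - 1) := Nat.pow_le_pow_right (by omega) h1
      have h3 : (2:ℕ) ^ n = 2 ^ (n - 1) + 2 ^ (n - 1) := by
        have h4 : n - 1 + 1 = n := by omega
        conv_lhs => rw [← h4]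
        rw [pow_succ]; omega
      omega
  rw [hFn] at hsumF
  omega

private lemma denom_set_eq {n : ℕ} (hn : 1 ≤ n) :
    {q : (ZMod 2)[X] | q.Monic ∧ Irreducible q ∧ q.natDegree = n} =
    ↑((normalizedFactors (X ^ 2 ^ n - X : (ZMod 2)[X])).toFinset.filter
      (fun q => q.natDegree = n)) := by
  classical
  have hP0 : (X ^ 2 ^ n - X : (ZMod 2)[X]) ≠ 0 :=
    FiniteField.X_pow_card_pow_sub_X_ne_zero (K' := ZMod 2) (n := n) (p := 2) (by omega) one_lt_two
  ext q
  simp only [Set.mem_setOf_eq, Finset.coe_filter, Multiset.mem_toFinset, Set.mem_setOf_eq]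
  constructor
  · rintro ⟨hm, hi, hd⟩
    refine ⟨mem_nf hP0 hm hi ?_, hd⟩
    have := dvd_self_pn q hm hi
    rwa [hd] at this
  · rintro ⟨hq, hd⟩
    exact ⟨monic_of_nf hq, irreducible_of_normalized_factor q hq, hd⟩

private lemma num_set_eq {n : ℕ} {M : (ZMod 2)[X]} (hM : M ≠ 0) :
    {q : (ZMod 2)[X] | q.Monic ∧ Irreducible q ∧ q.natDegree = n ∧ q ∣ M} =
    ↑((normalizedFactors M).toFinset.filter (fun q => q.natDegree = n)) := by
  classical
  ext q
  simp only [Set.mem_setOf_eq, Finset.coe_filter, Multiset.mem_toFinset, Set.mem_setOf_eq]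
  constructor
  · rintro ⟨hm, hi, hd, hdvd⟩
    exact ⟨mem_nf hM hm hi hdvd, hd⟩
  · rintro ⟨hq, hd⟩
    exact ⟨monic_of_nf hq, irreducible_of_normalized_factor q hq, hd,
      dvd_of_mem_normalizedFactors hq⟩

/-- If `p` is chosen uniformly at random from the (nonempty) set of monic
irreducible polynomials of degree exactly `n` over GF(2), then the probability
that `p` divides a fixed nonzero polynomial `M` of degree at most `m` is at most
`m · 2^(1−n)`. The probability is expressed as the counting ratio. -/
theorem prob_random_irreducible_divides (n m : ℕ) (hn : 1 ≤ n) (hm : 1 ≤ m)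
    (M : Polynomial (ZMod 2)) (hM : M ≠ 0) (hdeg : M.natDegree ≤ m) :
    ({q : Polynomial (ZMod 2) |
        q.Monic ∧ Irreducible q ∧ q.natDegree = n ∧ q ∣ M}.ncard : ℝ) /
      ({q : Polynomial (ZMod 2) |
        q.Monic ∧ Irreducible q ∧ q.natDegree = n}.ncard : ℝ)
      ≤ (m : ℝ) * 2 ^ ((1 : ℤ) - (n : ℤ)) := by
  classical
  rw [num_set_eq hM, denom_set_eq hn, Set.ncard_coe_finset, Set.ncard_coe_finset]
  set Nf := (normalizedFactors M).toFinset.filter (fun q => q.natDegree = n) with hNf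
  set Df := (normalizedFactors (X ^ 2 ^ n - X : (ZMod 2)[X])).toFinset.filter
      (fun q => q.natDegree = n) with hDf
  set N := Nf.card
  set D := Df.card
  -- numerator bound : n * N ≤ m
  have hnum : n * N ≤ m := by
    have : ∑ q ∈ Nf, q.natDegree ≤ M.natDegree := by
      apply sum_degrees_le hM
      intro q hq
      rw [hNf, Finset.mem_filter, Multiset.mem_toFinset] at hq
      exact ⟨monic_of_nf hq.1, irreducible_of_normalized_factor q hq.1,
        dvd_of_mem_normalizedFactors hq.1⟩
    have hconst : ∑ q ∈ Nf, q.natDegree = n * N := by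
      rw [Finset.sum_congr rfl (fun q hq => (Finset.mem_filter.mp hq).2), Finset.sum_const,
        smul_eq_mul, mul_comm]
    omega
  have hden : 2 ^ (n - 1) ≤ n * D := denom_count hn
  -- key nat inequality
  have key : N * 2 ^ n ≤ 2 * m * D := by
    have h1 : (2:ℕ) ^ n = 2 * 2 ^ (n - 1) := by
      have h4 : n - 1 + 1 = n := by omega
      conv_lhs => rw [← h4]
      rw [pow_succ]; ring
    calc N * 2 ^ n = 2 * (N * 2 ^ (n - 1)) := by rw [h1]; ring
      _ ≤ 2 * (N * (n * D)) := by
          exact Nat.mul_le_mul_left 2 (Nat.mul_le_mul_left N hden)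
      _ = 2 * ((n * N) * D) := by ring
      _ ≤ 2 * (m * D) := Nat.mul_le_mul_left 2 (Nat.mul_le_mul_right D hnum)
      _ = 2 * m * D := by ring
  have hD1 : 1 ≤ D := by
    rcases Nat.eq_zero_or_pos D with h | h
    · exfalso; rw [h, mul_zero] at hden
      have : 0 < 2 ^ (n-1) := Nat.pow_pos (by omega)
      omega
    · exact h
  have hDpos : (0:ℝ) < D := by exact_mod_cast hD1
  rw [div_le_iff₀ hDpos]
  have hz : (2:ℝ) ^ ((1:ℤ) - n) = 2 / 2 ^ (n:ℕ) := by
    rw [zpow_sub₀ (two_ne_zero), zpow_one, zpow_natCast]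
  rw [hz]
  have h2n : (0:ℝ) < 2 ^ (n:ℕ) := by positivity
  have heq : (m:ℝ) * (2 / 2 ^ (n:ℕ)) * D = (2 * m * D) / 2 ^ (n:ℕ) := by ring
  rw [heq, le_div_iff₀ h2n]
  exact_mod_cast key
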